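/- arXiv:1107.1941 — 5 statements merged into one kernel-verified Lean document; each statement's English description precedes it below -/
import Mathlib

section
/- Let S be a maximal independent set of a finite simple graph G (an independent set such that every vertex not in S is adjacent to some vertex of S). Then the transmit matrix of S, defined by M i j := (i ∈ S and i is adjacent to j in G), is a maximal matching matrix for G, and likewise the receive matrix of S, defined by M' i j := (j ∈ S and i is adjacent to j in G), is a maximal matching matrix for G. Hence every maximal independent set induces two maximal matching matrices. -/
/-- `M` is a matching matrix for the graph `G`: active links join adjacent
nodes, and no node simultaneously transmits and receives. -/
def IsMatchingMatrix {V : Type*} (G : SimpleGraph V) (M : V → V → Prop) : Prop :=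
  (∀ i j, M i j → G.Adj i j) ∧ (∀ i j k, M i j → ¬ M k i)

/-- `M` is a maximal matching matrix for `G`. -/
def IsMaximalMatchingMatrix {V : Type*} (G : SimpleGraph V) (M : V → V → Prop) : Prop :=
  IsMatchingMatrix G M ∧
    ∀ M' : V → V → Prop, IsMatchingMatrix G M' → (∀ i j, M i j → M' i j) → M' = M

/-- `S` is an independent set of `G`: no two of its vertices are adjacent. -/
def IsIndepSet {V : Type*} (G : SimpleGraph V) (S : Set V) : Prop :=
  ∀ i ∈ S, ∀ j ∈ S, ¬ G.Adj i j

/-- `S` is a maximal independent set of `G`: it is independent and every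
vertex outside `S` is adjacent to some vertex of `S`. -/
def IsMaximalIndepSet {V : Type*} (G : SimpleGraph V) (S : Set V) : Prop :=
  IsIndepSet G S ∧ ∀ v ∉ S, ∃ w ∈ S, G.Adj v w

/-- Every maximal independent set `S` of a finite simple graph `G` induces two
maximal matching matrices: the transmit matrix `M i j := i ∈ S ∧ G.Adj i j`
and the receive matrix `M' i j := j ∈ S ∧ G.Adj i j`. -/
theorem maximalIndepSet_induces_maximalMatchingMatrices {V : Type*} [Fintype V]
    (G : SimpleGraph V) (S : Set V) (hS : IsMaximalIndepSet G S) :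
    IsMaximalMatchingMatrix G (fun i j => i ∈ S ∧ G.Adj i j) ∧
      IsMaximalMatchingMatrix G (fun i j => j ∈ S ∧ G.Adj i j) := by
  obtain ⟨hind, hmax⟩ := hS
  constructor
  · refine ⟨⟨fun i j h => h.2, fun i j k hij hki => hind k hki.1 i hij.1 hki.2⟩, ?_⟩
    intro M' ⟨hM'adj, hM'nt⟩ hle
    funext i j
    apply propext
    refine ⟨fun h => ?_, hle i j⟩
    have hadj := hM'adj i j h
    refine ⟨?_, hadj⟩
    by_contra hi
    obtain ⟨w, hw, hwadj⟩ := hmax i hi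
    exact hM'nt i j w h (hle w i ⟨hw, hwadj.symm⟩)
  · refine ⟨⟨fun i j h => h.2, fun i j k hij hki => hind j hij.1 i hki.1 hij.2.symm⟩, ?_⟩
    intro M' ⟨hM'adj, hM'nt⟩ hle
    funext i j
    apply propext
    refine ⟨fun h => ?_, hle i j⟩
    have hadj := hM'adj i j h
    refine ⟨?_, hadj⟩
    by_contra hj
    obtain ⟨w, hw, hwadj⟩ := hmax j hj
    exact hM'nt j w i (hle j w ⟨hw, hwadj⟩) h
end

section
/- Not every maximal matching matrix is induced by a maximal independent set: let G be the simple graph on vertices {1,2,3,4,5} with edge set {{1,2},{1,3},{2,3},{3,4},{4,5}}, and let M be the relation with exactly the links 1→3, 2→3 and 5→4 (i.e., M i j holds precisely for (i,j) ∈ {(1,3),(2,3),(5,4)}). Then M is a maximal matching matrix for G, yet its set of transmitters {1,2,5} is not an independent set of G and its set of receivers {3,4} is not an independent set of G. -/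
/-- The five-node network of Fig. 2 (vertices `0,…,4` standing for `1,…,5`),
with edge set `{{1,2},{1,3},{2,3},{3,4},{4,5}}`. -/
def fiveNodeGraph : SimpleGraph (Fin 5) :=
  SimpleGraph.fromRel (fun i j =>
    (i = 0 ∧ j = 1) ∨ (i = 0 ∧ j = 2) ∨ (i = 1 ∧ j = 2) ∨
    (i = 2 ∧ j = 3) ∨ (i = 3 ∧ j = 4))

/-- The matching with exactly the links `1→3`, `2→3` and `5→4`
(in the `0`-based labelling: `0→2`, `1→2` and `4→3`). -/
def fiveNodeMatching : Fin 5 → Fin 5 → Prop :=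
  fun i j => (i = 0 ∧ j = 2) ∨ (i = 1 ∧ j = 2) ∨ (i = 4 ∧ j = 3)

/-- Not every maximal matching matrix is induced by a maximal independent set:
the matching with links `1→3`, `2→3`, `5→4` in the five-node network is a
maximal matching matrix, yet its set of transmitters `{1,2,5}` and its set of
receivers `{3,4}` are not independent sets. -/
theorem maximalMatching_not_from_indepSet :
    IsMaximalMatchingMatrix fiveNodeGraph fiveNodeMatching ∧
      ¬ IsIndepSet fiveNodeGraph {i | ∃ j, fiveNodeMatching i j} ∧
      ¬ IsIndepSet fiveNodeGraph {j | ∃ i, fiveNodeMatching i j} := by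
  have adjkey : ∀ i j : Fin 5, fiveNodeGraph.Adj i j ↔ i ≠ j ∧
      (((i = 0 ∧ j = 1) ∨ (i = 0 ∧ j = 2) ∨ (i = 1 ∧ j = 2) ∨ (i = 2 ∧ j = 3) ∨ (i = 3 ∧ j = 4)) ∨
       ((j = 0 ∧ i = 1) ∨ (j = 0 ∧ i = 2) ∨ (j = 1 ∧ i = 2) ∨ (j = 2 ∧ i = 3) ∨ (j = 3 ∧ i = 4))) := by
    intro i j
    unfold fiveNodeGraph
    rw [SimpleGraph.fromRel_adj]
  refine ⟨⟨⟨?_, ?_⟩, ?_⟩, ?_, ?_⟩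
  · rintro i j (⟨rfl, rfl⟩ | ⟨rfl, rfl⟩ | ⟨rfl, rfl⟩) <;> rw [adjkey] <;> decide
  · rintro i j k (⟨h1, h2⟩ | ⟨h1, h2⟩ | ⟨h1, h2⟩)
      (⟨h3, h4⟩ | ⟨h3, h4⟩ | ⟨h3, h4⟩) <;> subst_vars <;> simp_all
  · intro M' hM' hsub
    have h02 : M' 0 2 := hsub 0 2 (Or.inl ⟨rfl, rfl⟩)
    have h12 : M' 1 2 := hsub 1 2 (Or.inr (Or.inl ⟨rfl, rfl⟩))
    have h43 : M' 4 3 := hsub 4 3 (Or.inr (Or.inr ⟨rfl, rfl⟩))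
    funext i j
    apply propext
    constructor
    · intro h
      have adj := (adjkey i j).mp (hM'.1 i j h)
      rcases adj with ⟨hne, (⟨rfl, rfl⟩ | ⟨rfl, rfl⟩ | ⟨rfl, rfl⟩ | ⟨rfl, rfl⟩ | ⟨rfl, rfl⟩) |
        (⟨rfl, rfl⟩ | ⟨rfl, rfl⟩ | ⟨rfl, rfl⟩ | ⟨rfl, rfl⟩ | ⟨rfl, rfl⟩)⟩ <;>
        first
          | exact Or.inl ⟨rfl, rfl⟩
          | exact Or.inr (Or.inl ⟨rfl, rfl⟩)
          | exact Or.inr (Or.inr ⟨rfl, rfl⟩)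
          | exact absurd h (hM'.2 1 2 0 h12)
          | exact absurd h (hM'.2 0 2 1 h02)
          | exact absurd h02 (hM'.2 _ _ 0 h)
          | exact absurd h43 (hM'.2 _ _ 4 h)
    · exact hsub i j
  · intro h
    exact h 0 ⟨2, Or.inl ⟨rfl, rfl⟩⟩ 1 ⟨2, Or.inr (Or.inl ⟨rfl, rfl⟩)⟩
      (by rw [adjkey]; decide)
  · intro h
    exact h 2 ⟨0, Or.inl ⟨rfl, rfl⟩⟩ 3 ⟨4, Or.inr (Or.inr ⟨rfl, rfl⟩)⟩
      (by rw [adjkey]; decide)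
end

section
/- The optimum of the MTR scheduling problem is at most the optimum of the restricted (simultaneous-transmission) problem: let G be a finite simple graph with finite vertex set V, let T : V → V → ℕ be a traffic demand, and for each node i let t i := max over j of T i j. Suppose S⁽¹⁾, …, S⁽ᴸ⁾ are independent sets of G with airtimes x₁, …, x_L ∈ ℕ such that for every node i, the sum over l of xₗ · (1 if i ∈ S⁽ˡ⁾ else 0) is at least t i. Then the schedule consisting of the transmit matrices M⁽ˡ⁾ i j := (i ∈ S⁽ˡ⁾ and i adjacent to j), with the same airtimes x₁, …, x_L, is a schedule of matching matrices that meets T, and it has the same total length x₁ + … + x_L. -/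
open Classical in
/-- The optimum of the MTR scheduling problem is at most the optimum of the
restricted (simultaneous-transmission) problem: if independent sets
`S l` with airtimes `x l` cover the per-node demands `t i = max_j T i j`,
then the transmit matrices `M l i j := i ∈ S l ∧ G.Adj i j`, with the same
airtimes (hence the same total length), form a schedule of matching matrices
that meets `T`. -/
theorem indepSet_schedule_dominates {V : Type*} [Fintype V]
    (G : SimpleGraph V) (T : V → V → ℕ) (hT : ∀ i j, ¬ G.Adj i j → T i j = 0)
    (L : ℕ) (S : Fin L → Set V) (x : Fin L → ℕ)
    (hS : ∀ l, IsIndepSet G (S l))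
    (hcover : ∀ i, Finset.univ.sup (fun j => T i j) ≤
      ∑ l, x l * (if i ∈ S l then 1 else 0)) :
    (∀ l, IsMatchingMatrix G (fun i j => i ∈ S l ∧ G.Adj i j)) ∧
      ∀ i j, T i j ≤ ∑ l, x l * (if i ∈ S l ∧ G.Adj i j then 1 else 0) := by
  constructor
  · intro l
    refine ⟨fun i j h => h.2, fun i j k h hk => ?_⟩
    exact hS l k hk.1 i h.1 hk.2
  · intro i j
    by_cases hadj : G.Adj i j
    · calc T i j ≤ Finset.univ.sup (fun j => T i j) :=
            Finset.le_sup (Finset.mem_univ j)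
        _ ≤ ∑ l, x l * (if i ∈ S l then 1 else 0) := hcover i
        _ = ∑ l, x l * (if i ∈ S l ∧ G.Adj i j then 1 else 0) := by
            refine Finset.sum_congr rfl fun l _ => ?_
            simp [hadj]
    · simp [hT i j hadj]
end

section
/- Bipartite MTR networks can be scheduled in T₁ + T₂ slots: let G be a finite simple graph whose vertex set is partitioned into sets A and B such that every edge of G joins a vertex of A and a vertex of B, and let T : V → V → ℕ be a traffic demand. Let T₁ := max over i ∈ A and j ∈ B of T i j, and T₂ := max over i ∈ B and j ∈ A of T i j. Then the two relations M_A i j := (i ∈ A and i adjacent to j) and M_B i j := (i ∈ B and i adjacent to j) are matching matrices for G, and the schedule assigning airtime T₁ to M_A and airtime T₂ to M_B meets T; hence there is a feasible schedule of total length T₁ + T₂. -/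
open Classical in
/-- Bipartite MTR networks can be scheduled in `T₁ + T₂` slots: if the vertex
set is partitioned into `A` and `B` with every edge joining `A` and `B`, then
the relations `M_A i j := i ∈ A ∧ G.Adj i j` and `M_B i j := i ∈ B ∧ G.Adj i j`
are matching matrices, and the schedule giving airtime
`T₁ = max_{i ∈ A, j ∈ B} T i j` to `M_A` and `T₂ = max_{i ∈ B, j ∈ A} T i j`
to `M_B` meets the traffic demand `T`; hence there is a feasible schedule of
total length `T₁ + T₂`. -/
theorem bipartite_schedule {V : Type*} [Fintype V]
    (G : SimpleGraph V) (A B : Set V)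
    (hpart : ∀ v, (v ∈ A ∨ v ∈ B) ∧ ¬ (v ∈ A ∧ v ∈ B))
    (hbip : ∀ i j, G.Adj i j → (i ∈ A ∧ j ∈ B) ∨ (i ∈ B ∧ j ∈ A))
    (T : V → V → ℕ) (hT : ∀ i j, ¬ G.Adj i j → T i j = 0) :
    IsMatchingMatrix G (fun i j => i ∈ A ∧ G.Adj i j) ∧
    IsMatchingMatrix G (fun i j => i ∈ B ∧ G.Adj i j) ∧
    ∀ i j, T i j ≤
      (Finset.univ.sup fun p : V × V =>
          if p.1 ∈ A ∧ p.2 ∈ B then T p.1 p.2 else 0) *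
        (if i ∈ A ∧ G.Adj i j then 1 else 0) +
      (Finset.univ.sup fun p : V × V =>
          if p.1 ∈ B ∧ p.2 ∈ A then T p.1 p.2 else 0) *
        (if i ∈ B ∧ G.Adj i j then 1 else 0) := by
  refine ⟨⟨fun i j h => h.2, ?_⟩, ⟨fun i j h => h.2, ?_⟩, ?_⟩
  · rintro i j k ⟨hiA, _⟩ ⟨hkA, hki⟩
    rcases hbip k i hki with ⟨_, hiB⟩ | ⟨hkB, _⟩
    · exact (hpart i).2 ⟨hiA, hiB⟩
    · exact (hpart k).2 ⟨hkA, hkB⟩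
  · rintro i j k ⟨hiB, _⟩ ⟨hkB, hki⟩
    rcases hbip k i hki with ⟨hkA, _⟩ | ⟨_, hiA⟩
    · exact (hpart k).2 ⟨hkA, hkB⟩
    · exact (hpart i).2 ⟨hiA, hiB⟩
  · intro i j
    by_cases hadj : G.Adj i j
    · rcases hbip i j hadj with ⟨hiA, hjB⟩ | ⟨hiB, hjA⟩
      · have h1 : T i j ≤ Finset.univ.sup fun p : V × V =>
            if p.1 ∈ A ∧ p.2 ∈ B then T p.1 p.2 else 0 := by
          have := Finset.le_sup (f := fun p : V × V =>
            if p.1 ∈ A ∧ p.2 ∈ B then T p.1 p.2 else 0)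
            (Finset.mem_univ (i, j))
          simpa [hiA, hjB] using this
        calc T i j ≤ (Finset.univ.sup fun p : V × V =>
            if p.1 ∈ A ∧ p.2 ∈ B then T p.1 p.2 else 0) * 1 := by simpa using h1
          _ ≤ _ := by simp [hiA, hadj]
      · have h1 : T i j ≤ Finset.univ.sup fun p : V × V =>
            if p.1 ∈ B ∧ p.2 ∈ A then T p.1 p.2 else 0 := by
          have := Finset.le_sup (f := fun p : V × V =>
            if p.1 ∈ B ∧ p.2 ∈ A then T p.1 p.2 else 0)
            (Finset.mem_univ (i, j))
          simpa [hiB, hjA] using this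
        calc T i j ≤ (Finset.univ.sup fun p : V × V =>
            if p.1 ∈ B ∧ p.2 ∈ A then T p.1 p.2 else 0) * 1 := by simpa using h1
          _ ≤ _ := by simp [hiB, hadj]
    · simp [hT i j hadj]
end

section
/- MTR can activate strictly more links than conventional half-duplex scheduling: let G be the simple graph on vertices {1,2,3,4} with edge set {{1,2},{1,3},{2,3},{3,4}}. Then the relation M with exactly the links 1→2, 1→3 and 4→3 is a matching matrix for G with 3 active links, whereas every set of directed links of G in which each node appears in at most one link (as transmitter or receiver) contains at most 2 links. -/
/-- The four-node network of Fig. 1 (vertices `0,…,3` standing for `1,…,4`),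
with edge set `{{1,2},{1,3},{2,3},{3,4}}`. -/
def fourNodeGraph : SimpleGraph (Fin 4) :=
  SimpleGraph.fromRel (fun i j =>
    (i = 0 ∧ j = 1) ∨ (i = 0 ∧ j = 2) ∨ (i = 1 ∧ j = 2) ∨ (i = 2 ∧ j = 3))

/-- The matching with exactly the links `1→2`, `1→3` and `4→3`
(in the `0`-based labelling: `0→1`, `0→2` and `3→2`). -/
def fourNodeMatching : Fin 4 → Fin 4 → Prop :=
  fun i j => (i = 0 ∧ j = 1) ∨ (i = 0 ∧ j = 2) ∨ (i = 3 ∧ j = 2)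

/-- MTR can activate strictly more links than conventional half-duplex
scheduling: in the four-node network, the links `1→2`, `1→3`, `4→3` form a
matching matrix with 3 active links, whereas every set of directed links in
which each node appears in at most one link (as transmitter or receiver)
contains at most 2 links. -/
theorem mtr_beats_conventional :
    IsMatchingMatrix fourNodeGraph fourNodeMatching ∧
    Set.ncard {p : Fin 4 × Fin 4 | fourNodeMatching p.1 p.2} = 3 ∧
    ∀ L : Set (Fin 4 × Fin 4),
      (∀ p ∈ L, fourNodeGraph.Adj p.1 p.2) →
      (∀ p ∈ L, ∀ q ∈ L, p ≠ q →
        p.1 ≠ q.1 ∧ p.1 ≠ q.2 ∧ p.2 ≠ q.1 ∧ p.2 ≠ q.2) →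
      L.ncard ≤ 2 := by
  refine ⟨⟨?_, ?_⟩, ?_, ?_⟩
  · intro i j h
    rcases h with ⟨hi, hj⟩ | ⟨hi, hj⟩ | ⟨hi, hj⟩ <;> subst hi <;> subst hj <;>
      simp [fourNodeGraph, SimpleGraph.fromRel_adj]
  · intro i j k hij hki
    rcases hij with ⟨hi, hj⟩ | ⟨hi, hj⟩ | ⟨hi, hj⟩ <;> subst hi <;>
      rcases hki with ⟨_, h⟩ | ⟨_, h⟩ | ⟨_, h⟩ <;> exact absurd h (by decide)
  · have : {p : Fin 4 × Fin 4 | fourNodeMatching p.1 p.2} =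
        (↑({((0 : Fin 4), (1 : Fin 4)), (0, 2), (3, 2)} : Finset (Fin 4 × Fin 4))) := by
      ext ⟨i, j⟩
      simp [fourNodeMatching, Prod.ext_iff]
    rw [this, Set.ncard_coe_finset]
    decide
  · intro L hadj hdisj
    by_contra h
    push_neg at h
    have h3 : 2 < L.ncard := h
    obtain ⟨p, hp, q, hq, r, hr, hpq, hpr, hqr⟩ := (Set.two_lt_ncard (Set.toFinite L)).mp h3
    have hp' := (hadj p hp).ne
    have hq' := (hadj q hq).ne
    have hr' := (hadj r hr).ne
    obtain ⟨a1, a2, a3, a4⟩ := hdisj p hp q hq hpq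
    obtain ⟨b1, b2, b3, b4⟩ := hdisj p hp r hr hpr
    obtain ⟨c1, c2, c3, c4⟩ := hdisj q hq r hr hqr
    have : ({p.1, p.2, q.1, q.2, r.1, r.2} : Finset (Fin 4)).card = 6 := by
      rw [Finset.card_insert_of_notMem (by simp_all),
        Finset.card_insert_of_notMem (by simp_all),
        Finset.card_insert_of_notMem (by simp_all),
        Finset.card_insert_of_notMem (by simp_all),
        Finset.card_insert_of_notMem (by simp_all)]
      rfl
    have hle := Finset.card_le_univ ({p.1, p.2, q.1, q.2, r.1, r.2} : Finset (Fin 4))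
    simp [this] at hle
end
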